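/- The number δ_n of distinct correlations between two strings of length n satisfies δ_n = Σ_{j=0}^{n} κ_j, where κ_j is the number of autocorrelations of strings of length j. -/

import Mathlib

def IsPeriod {α : Type*} (n : ℕ) (u : Fin n → α) (p : ℕ) : Prop :=
  p < n ∧ ∀ (i : ℕ) (h : i + p < n),
    u ⟨i, Nat.lt_of_le_of_lt (Nat.le_add_right i p) h⟩ = u ⟨i + p, h⟩

/-- `t` is the correlation of `u` over `v` (equal length `n`): `t k = 1` iff the
suffix of `u` starting at `k` matches the prefix of `v` of the same length. -/
def IsCorr {α : Type*} (n : ℕ) (u v : Fin n → α) (t : Fin n → Bool) : Prop :=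
  ∀ k : Fin n, t k = true ↔
    ∀ (j : ℕ) (h : (k : ℕ) + j < n), u ⟨(k : ℕ) + j, h⟩ = v ⟨j, by omega⟩

/-- The set of autocorrelations of (binary) strings of length `j`. -/
def Gamma (j : ℕ) : Set (Fin j → Bool) :=
  {s | ∃ u : Fin j → Bool, ∀ p : Fin j, s p = true ↔ IsPeriod j u (p : ℕ)}

/-- The set of correlations of pairs of (binary) strings of length `n`. -/
def Delta (n : ℕ) : Set (Fin n → Bool) :=
  {t | ∃ u v : Fin n → Bool, IsCorr n u v t}

/-- pad with `false`s in front -/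
def pad (n j : ℕ) (s : Fin j → Bool) : Fin n → Bool :=
  fun i => if h : n - j ≤ (i : ℕ) ∧ (i : ℕ) - (n - j) < j then
    s ⟨(i : ℕ) - (n - j), h.2⟩ else false

lemma pad_hi {n j : ℕ} (s : Fin j → Bool) (i : Fin n)
    (h1 : n - j ≤ (i : ℕ)) (h2 : (i : ℕ) - (n - j) < j) :
    pad n j s i = s ⟨(i : ℕ) - (n - j), h2⟩ := dif_pos ⟨h1, h2⟩

lemma pad_lo {n j : ℕ} (s : Fin j → Bool) (i : Fin n)
    (h1 : ¬ n - j ≤ (i : ℕ)) : pad n j s i = false :=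
  dif_neg (fun h => h1 h.1)

def padU (n j : ℕ) (b : Bool) (u : Fin j → Bool) : Fin n → Bool :=
  fun i => if h : n - j ≤ (i : ℕ) ∧ (i : ℕ) - (n - j) < j then
    u ⟨(i : ℕ) - (n - j), h.2⟩ else b

lemma padU_hi {n j : ℕ} (b : Bool) (u : Fin j → Bool) (i : Fin n)
    (h1 : n - j ≤ (i : ℕ)) (h2 : (i : ℕ) - (n - j) < j) :
    padU n j b u i = u ⟨(i : ℕ) - (n - j), h2⟩ := dif_pos ⟨h1, h2⟩

lemma padU_lo {n j : ℕ} (b : Bool) (u : Fin j → Bool) (i : Fin n)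
    (h1 : ¬ n - j ≤ (i : ℕ)) : padU n j b u i = b := dif_neg (fun h => h1 h.1)

def padV (n j : ℕ) (u : Fin j → Bool) : Fin n → Bool :=
  fun i => if h : (i : ℕ) < j then u ⟨(i : ℕ), h⟩ else false

lemma padV_lt {n j : ℕ} (u : Fin j → Bool) (i : Fin n) (h : (i : ℕ) < j) :
    padV n j u i = u ⟨(i : ℕ), h⟩ := dif_pos h

lemma gamma_head {j : ℕ} (hj : 0 < j) {s : Fin j → Bool} (hs : s ∈ Gamma j) :
    s ⟨0, hj⟩ = true := by
  obtain ⟨u, hu⟩ := hs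
  rw [hu]
  exact ⟨hj, fun i h => by congr 1⟩

lemma pad_inj {n j : ℕ} (hj : j ≤ n) : Function.Injective (pad n j) := by
  intro s s' h
  funext p
  have := congrFun h ⟨n - j + (p : ℕ), by omega⟩
  rw [pad_hi s _ (by simp) (by simp [p.isLt]),
      pad_hi s' _ (by simp) (by simp [p.isLt])] at this
  have hp : (⟨((⟨n - j + (p : ℕ), by omega⟩ : Fin n) : ℕ) - (n - j),
      by simp [p.isLt]⟩ : Fin j) = p := Fin.ext (by simp)
  rwa [hp] at this

lemma pad_mem_delta {n j : ℕ} (hj : j ≤ n) {s : Fin j → Bool} (hs : s ∈ Gamma j) :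
    pad n j s ∈ Delta n := by
  obtain ⟨u, hu⟩ := hs
  set b : Bool := if h : 0 < j then ! u ⟨0, h⟩ else true with hb
  refine ⟨padU n j b u, padV n j u, ?_⟩
  intro k
  by_cases hk : n - j ≤ (k : ℕ)
  · have hk2 : (k : ℕ) - (n - j) < j := by omega
    rw [pad_hi s k hk hk2, hu]
    constructor
    · rintro ⟨-, hper⟩ i hi
      rw [padU_hi b u _ (by simp; omega) (by simp; omega),
          padV_lt u _ (by simp; omega)]
      have hidx : (⟨((⟨(k:ℕ) + i, hi⟩ : Fin n) : ℕ) - (n - j), by simp; omega⟩ : Fin j)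
          = ⟨i + ((k:ℕ) - (n - j)), by omega⟩ := Fin.ext (by simp; omega)
      rw [hidx]
      have := (hper i (by simp; omega)).symm
      convert this using 2 <;> exact Fin.ext (by simp)
    · intro hall
      refine ⟨hk2, fun i hi => ?_⟩
      have hkin : (k : ℕ) + i < n := by simp at hi; omega
      have := hall i hkin
      rw [padU_hi b u _ (by simp; omega) (by simp; simp at hi; omega),
          padV_lt u _ (by simp; simp at hi; omega)] at this
      have hidx : (⟨((⟨(k:ℕ) + i, hkin⟩ : Fin n) : ℕ) - (n - j), by simp; simp at hi; omega⟩ : Fin j)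
          = ⟨i + ((k:ℕ) - (n - j)), by simp at hi; omega⟩ := Fin.ext (by simp; omega)
      rw [hidx] at this
      have := this.symm
      convert this using 2 <;> exact Fin.ext (by simp)
  · rw [pad_lo s k hk]
    simp only [Bool.false_eq_true, false_iff]
    intro hall
    have h0 := hall 0 (by omega)
    rw [padU_lo b u _ (by simp; omega)] at h0
    by_cases hjj : 0 < j
    · rw [show padV n j u ⟨0, by omega⟩ = u ⟨0, hjj⟩ from dif_pos hjj] at h0
      rw [hb, dif_pos hjj] at h0
      simp at h0
    · rw [show padV n j u ⟨0, by omega⟩ = false from dif_neg (by simpa using hjj)] at h0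
      rw [hb, dif_neg hjj] at h0
      simp at h0

lemma delta_sub {n : ℕ} {t : Fin n → Bool} (ht : t ∈ Delta n) :
    ∃ j, j ≤ n ∧ ∃ s ∈ Gamma j, t = pad n j s := by
  classical
  obtain ⟨u, v, hc⟩ := ht
  by_cases hex : ∃ k : ℕ, ∃ h : k < n, t ⟨k, h⟩ = true
  · set k0 := Nat.find hex with hk0def
    obtain ⟨hk0n, hk0t⟩ : ∃ h : k0 < n, t ⟨k0, h⟩ = true := Nat.find_spec hex
    have hmin : ∀ m, m < k0 → ∀ h : m < n, t ⟨m, h⟩ = false := by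
      intro m hm h
      by_contra hmt
      exact Nat.find_min hex hm ⟨h, by simpa using hmt⟩
    refine ⟨n - k0, by omega, fun p => t ⟨k0 + (p : ℕ), by omega⟩, ?_, ?_⟩
    · refine ⟨fun i => u ⟨k0 + (i : ℕ), by omega⟩, fun p => ?_⟩
      rw [hc ⟨k0 + (p : ℕ), by omega⟩]
      have hk0' : ∀ i, ∀ h : k0 + i < n, u ⟨k0 + i, h⟩ = v ⟨i, by omega⟩ :=
        (hc ⟨k0, hk0n⟩).mp hk0t
      constructor
      · intro hall
        have hall' : ∀ i, ∀ h : k0 + (p : ℕ) + i < n,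
            u ⟨k0 + (p : ℕ) + i, h⟩ = v ⟨i, by omega⟩ := hall
        refine ⟨p.isLt, fun i hi => ?_⟩
        have hi' : i + (p : ℕ) < n - k0 := hi
        have h2 : k0 + (p : ℕ) + i < n := by omega
        show u ⟨k0 + i, by omega⟩ = u ⟨k0 + (i + (p : ℕ)), by omega⟩
        rw [hk0' i (by omega),
          show (⟨k0 + (i + (p : ℕ)), by omega⟩ : Fin n) = ⟨k0 + (p : ℕ) + i, h2⟩
            from Fin.ext (by simp; omega), hall' i h2]
      · rintro ⟨-, hper⟩ i hi
        have hper' : ∀ i, ∀ _ : i + (p : ℕ) < n - k0,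
            u ⟨k0 + i, by omega⟩ = u ⟨k0 + (i + (p : ℕ)), by omega⟩ := hper
        have hi' : k0 + (p : ℕ) + i < n := hi
        show u ⟨k0 + (p : ℕ) + i, hi'⟩ = v ⟨i, by omega⟩
        rw [show (⟨k0 + (p : ℕ) + i, hi'⟩ : Fin n) = ⟨k0 + (i + (p : ℕ)), by omega⟩
              from Fin.ext (by simp; omega), ← hper' i (by omega), hk0' i (by omega)]
    · funext i
      by_cases hik : k0 ≤ (i : ℕ)
      · have hle : n - (n - k0) ≤ (i : ℕ) := by omega
        have h2 : (i : ℕ) - (n - (n - k0)) < n - k0 := by omega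
        rw [pad_hi _ i hle h2]
        congr 1
        exact Fin.ext (by simp; omega)
      · rw [pad_lo _ i (by omega)]
        exact hmin (i : ℕ) (by omega) i.isLt ▸ by
          have := hmin (i : ℕ) (by omega) i.isLt
          simpa using this
  · push_neg at hex
    refine ⟨0, Nat.zero_le n, fun p => p.elim0, ⟨fun p => p.elim0, fun p => p.elim0⟩, ?_⟩
    funext i
    rw [pad_lo _ i (by omega)]
    have := hex (i : ℕ) i.isLt
    simpa using this

lemma pad_disjoint {n j j' : ℕ} (hjj : j < j') (hj' : j' ≤ n)
    {s : Fin j → Bool} {s' : Fin j' → Bool} (hs' : s' ∈ Gamma j') :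
    pad n j s ≠ pad n j' s' := by
  intro h
  have hlt : n - j' < n := by omega
  have h1 := congrFun h ⟨n - j', hlt⟩
  rw [pad_lo s _ (by simp; omega)] at h1
  rw [pad_hi s' _ (by simp) (by simp; omega)] at h1
  rw [show (⟨((⟨n - j', hlt⟩ : Fin n) : ℕ) - (n - j'), by simp; omega⟩ : Fin j')
        = ⟨0, by omega⟩ from Fin.ext (by simp)] at h1
  rw [gamma_head (by omega) hs'] at h1
  exact absurd h1 (by simp)

theorem delta_eq_sum_kappa (n : ℕ) :
    (Delta n).ncard = ∑ j ∈ Finset.range (n + 1), (Gamma j).ncard := by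
  classical
  have hG : ∀ j, (Gamma j).Finite := fun j => Set.toFinite _
  set F : ℕ → Finset (Fin n → Bool) :=
    fun j => ((hG j).toFinset.image (pad n j)) with hF
  have hDelta : Delta n = ↑((Finset.range (n + 1)).biUnion F) := by
    ext t
    simp only [Finset.coe_biUnion, Set.mem_iUnion, Finset.mem_coe, Finset.mem_biUnion,
      Finset.mem_range, Finset.mem_image, Set.Finite.mem_toFinset, hF]
    constructor
    · intro ht
      obtain ⟨j, hj, s, hs, rfl⟩ := delta_sub ht
      exact ⟨j, by omega, s, hs, rfl⟩
    · rintro ⟨j, hj, s, hs, rfl⟩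
      exact pad_mem_delta (by omega) hs
  rw [hDelta, Set.ncard_coe_finset]
  rw [Finset.card_biUnion]
  · apply Finset.sum_congr rfl
    intro j hj
    simp only [hF]
    rw [Finset.card_image_of_injective _ (pad_inj (by simp at hj; omega))]
    rw [Set.ncard_eq_toFinset_card (Gamma j) (hG j)]
  · intro j hj j' hj' hne
    simp only [Finset.mem_coe, Finset.mem_range] at hj hj'
    rw [Function.onFun, Finset.disjoint_left]
    rintro a ha ha'
    simp only [hF, Finset.mem_image, Set.Finite.mem_toFinset] at ha ha'
    obtain ⟨s, hs, rfl⟩ := ha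
    obtain ⟨s', hs', heq⟩ := ha'
    rcases lt_or_gt_of_ne hne with hlt | hlt
    · exact pad_disjoint hlt (by omega) hs' heq.symm
    · exact pad_disjoint hlt (by omega) hs heq
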